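/- arXiv:1711.03746 — 2 statements merged into one kernel-verified Lean document; each statement's English description precedes it below -/
import Mathlib

section
/- Let X be a proper metric space, ρ : C₀(X) → B(H) a nondegenerate representation, B ⊆ X a compact subset, and T ∈ B(H) a locally compact operator such that ρ(f)T = 0 and Tρ(f) = 0 for every f ∈ C₀(X) vanishing on B. Then T is a compact operator. -/
open scoped ZeroAtInfty
open ContinuousLinearMap

/-- A representation `ρ : C₀(X) → B(H)` is nondegenerate if the closed linear span of
`{ρ(f)v : f ∈ C₀(X), v ∈ H}` equals `H`. -/
def Nondegenerate {X H : Type*} [MetricSpace X]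
    [NormedAddCommGroup H] [InnerProductSpace ℂ H] [CompleteSpace H]
    (ρ : C₀(X, ℂ) →⋆ₙₐ[ℂ] (H →L[ℂ] H)) : Prop :=
  (Submodule.span ℂ {w : H | ∃ f : C₀(X, ℂ), ∃ v : H, w = ρ f v}).topologicalClosure = ⊤

/-- An operator `T ∈ B(H)` is locally compact with respect to `ρ` if `ρ(f)T` and `Tρ(f)` are
compact operators for every `f ∈ C₀(X)`. -/
def LocallyCompactOp {X H : Type*} [MetricSpace X]
    [NormedAddCommGroup H] [InnerProductSpace ℂ H] [CompleteSpace H]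
    (ρ : C₀(X, ℂ) →⋆ₙₐ[ℂ] (H →L[ℂ] H)) (T : H →L[ℂ] H) : Prop :=
  ∀ f : C₀(X, ℂ), IsCompactOperator ⇑(ρ f ∘L T) ∧ IsCompactOperator ⇑(T ∘L ρ f)

/-- Let `X` be a proper metric space, `ρ : C₀(X) → B(H)` a nondegenerate
representation, `B ⊆ X` a compact subset, and `T ∈ B(H)` a locally compact operator such that
`ρ(f)T = 0` and `Tρ(f) = 0` for every `f ∈ C₀(X)` vanishing on `B`. Then `T` is a compact
operator. -/
theorem compactly_supported_locally_compact_is_compact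
    (X : Type*) [MetricSpace X] [ProperSpace X]
    (H : Type*) [NormedAddCommGroup H] [InnerProductSpace ℂ H] [CompleteSpace H]
    (ρ : C₀(X, ℂ) →⋆ₙₐ[ℂ] (H →L[ℂ] H)) (hρ : Nondegenerate ρ)
    (B : Set X) (hB : IsCompact B)
    (T : H →L[ℂ] H) (hT : LocallyCompactOp ρ T)
    (hsupp : ∀ f : C₀(X, ℂ), (∀ y ∈ B, f y = 0) → ρ f ∘L T = 0 ∧ T ∘L ρ f = 0) :
    IsCompactOperator ⇑T := by
  obtain ⟨φ, hφ1, -, hφc, -⟩ :=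
    exists_continuous_one_zero_of_isCompact hB isClosed_empty (Set.disjoint_empty B)
  -- complex-valued version in C₀
  set f : C₀(X, ℂ) :=
    { toFun := fun x => (φ x : ℂ)
      continuous_toFun := Complex.continuous_ofReal.comp φ.continuous
      zero_at_infty' := by
        have h0 := hφc.is_zero_at_infty
        have : Filter.Tendsto (fun x => (φ x : ℂ)) (Filter.cocompact X) (nhds ((0:ℝ):ℂ)) :=
          (Complex.continuous_ofReal.tendsto 0).comp h0
        simpa using this } with hf
  -- T = ρ f ∘L T
  have key : T = ρ f ∘L T := by
    have horth : ∀ w : H, T w - ρ f (T w) = 0 := by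
      intro w
      set S : H →L[ℂ] H := T - ρ f ∘L T with hS
      have hgS : ∀ g : C₀(X, ℂ), ρ g ∘L S = 0 := by
        intro g
        have hvan : ∀ y ∈ B, (g - g * f) y = 0 := by
          intro y hy
          have : f y = 1 := by
            simp only [hf, ZeroAtInftyContinuousMap.coe_mk]
            norm_cast
            exact hφ1 hy
          simp [this]
        have h0 := (hsupp (g - g * f) hvan).1
        have : ρ (g - g * f) = ρ g - ρ g ∘L ρ f := by
          rw [map_sub, map_mul]; rfl
        rw [this] at h0
        have : ρ g ∘L S = (ρ g - ρ g ∘L ρ f) ∘L T := by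
          ext v; simp [hS, ContinuousLinearMap.sub_apply]
        rw [this, h0]
      have hmem : S w ∈ (Submodule.span ℂ {w : H | ∃ f : C₀(X, ℂ), ∃ v : H, w = ρ f v})ᗮ := by
        rw [Submodule.mem_orthogonal]
        intro u hu
        induction hu using Submodule.span_induction with
        | mem u hu =>
          obtain ⟨g, v, rfl⟩ := hu
          have : ρ (star g) (S w) = 0 := by
            simpa using congrArg (fun A => A w) (hgS (star g))
          calc inner ℂ (ρ g v) (S w) = inner ℂ v ((ρ g).adjoint (S w)) :=
                (ContinuousLinearMap.adjoint_inner_right _ _ _).symm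
            _ = inner ℂ v (ρ (star g) (S w)) := by
                rw [← ContinuousLinearMap.star_eq_adjoint, ← map_star]
            _ = 0 := by rw [this, inner_zero_right]
        | zero => simp
        | add _ _ _ _ h1 h2 => rw [inner_add_left, h1, h2, add_zero]
        | smul c _ _ h1 => rw [inner_smul_left, h1, mul_zero]
      have hbot : (Submodule.span ℂ {w : H | ∃ f : C₀(X, ℂ), ∃ v : H, w = ρ f v})ᗮ = ⊥ := by
        rw [← Submodule.topologicalClosure_eq_top_iff]; exact hρ
      have := hbot ▸ hmem
      simpa [hS, ContinuousLinearMap.sub_apply] using (Submodule.mem_bot ℂ).mp this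
    ext w
    have := horth w
    simp only [ContinuousLinearMap.comp_apply]
    exact sub_eq_zero.mp this
  have := (hT f).1
  rwa [← key] at this
end

section
/- Let X be a metric space and U1, U2 ⊆ U ⊆ X subsets. If U1 and U2 coarsely cover U, then their closures Ū1 and Ū2 coarsely cover the closure Ū; that is, if for every R > 0 the set {x ∈ U : d(x, U∖U1) ≤ R and d(x, U∖U2) ≤ R} is bounded, then for every R > 0 the set {x ∈ Ū : d(x, Ū∖Ū1) ≤ R and d(x, Ū∖Ū2) ≤ R} is bounded. -/
/-- Subsets `U1, U2 ⊆ U` coarsely cover `U` if for every `R > 0` the set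
`{x ∈ U : d(x, U∖U1) ≤ R and d(x, U∖U2) ≤ R}` is metrically bounded. -/
def CoarselyCovers {X : Type*} [MetricSpace X] (U U1 U2 : Set X) : Prop :=
  ∀ R > (0 : ℝ), Bornology.IsBounded
    {x ∈ U | (∃ y ∈ U \ U1, dist x y ≤ R) ∧ (∃ y ∈ U \ U2, dist x y ≤ R)}

/-- Let `X` be a metric space and `U1, U2 ⊆ U ⊆ X` subsets. If `U1` and `U2`
coarsely cover `U`, then their closures `Ū1` and `Ū2` coarsely cover the closure `Ū`. -/
theorem coarse_cover_closure
    (X : Type*) [MetricSpace X] (U U1 U2 : Set X)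
    (hU1 : U1 ⊆ U) (hU2 : U2 ⊆ U)
    (hcover : CoarselyCovers U U1 U2) :
    CoarselyCovers (closure U) (closure U1) (closure U2) := by
  intro R hR
  have hB := (hcover (R + 2) (by linarith)).cthickening (δ := 1)
  refine hB.subset ?_
  rintro x ⟨hxU, ⟨y1, ⟨hy1U, hy1n⟩, hd1⟩, ⟨y2, ⟨hy2U, hy2n⟩, hd2⟩⟩
  -- pick x' ∈ U close to x
  obtain ⟨x', hx'U, hx'd⟩ := Metric.mem_closure_iff.mp hxU 1 one_pos
  -- y1 not in closure U1: positive distance to U1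
  have h1 : ∃ ε > (0:ℝ), ∀ z ∈ U1, ε ≤ dist y1 z := by
    by_contra h
    push_neg at h
    exact hy1n (Metric.mem_closure_iff.mpr (fun ε hε => by
      obtain ⟨z, hz, hzd⟩ := h ε hε
      exact ⟨z, hz, hzd⟩))
  obtain ⟨ε1, hε1, hε1'⟩ := h1
  obtain ⟨y1', hy1'U, hy1'd⟩ := Metric.mem_closure_iff.mp hy1U (min ε1 1)
    (lt_min hε1 one_pos)
  have hy1'n : y1' ∉ U1 := fun h => absurd (hε1' y1' h)
    (not_le.mpr (lt_of_lt_of_le hy1'd (min_le_left _ _)))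
  have h2 : ∃ ε > (0:ℝ), ∀ z ∈ U2, ε ≤ dist y2 z := by
    by_contra h
    push_neg at h
    exact hy2n (Metric.mem_closure_iff.mpr (fun ε hε => by
      obtain ⟨z, hz, hzd⟩ := h ε hε
      exact ⟨z, hz, hzd⟩))
  obtain ⟨ε2, hε2, hε2'⟩ := h2
  obtain ⟨y2', hy2'U, hy2'd⟩ := Metric.mem_closure_iff.mp hy2U (min ε2 1)
    (lt_min hε2 one_pos)
  have hy2'n : y2' ∉ U2 := fun h => absurd (hε2' y2' h)
    (not_le.mpr (lt_of_lt_of_le hy2'd (min_le_left _ _)))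
  have hx' : x' ∈ {x ∈ U | (∃ y ∈ U \ U1, dist x y ≤ R + 2) ∧
      (∃ y ∈ U \ U2, dist x y ≤ R + 2)} := by
    refine ⟨hx'U, ⟨y1', ⟨hy1'U, hy1'n⟩, ?_⟩, ⟨y2', ⟨hy2'U, hy2'n⟩, ?_⟩⟩
    · calc dist x' y1' ≤ dist x' x + dist x y1 + dist y1 y1' := dist_triangle4 _ _ _ _
        _ ≤ 1 + R + 1 := by
            have h1 := hy1'd.le.trans (min_le_right ε1 1)
            have h2 : dist x' x = dist x x' := dist_comm _ _
            linarith [hx'd.le]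
        _ = R + 2 := by ring
    · calc dist x' y2' ≤ dist x' x + dist x y2 + dist y2 y2' := dist_triangle4 _ _ _ _
        _ ≤ 1 + R + 1 := by
            have h1 := hy2'd.le.trans (min_le_right ε2 1)
            have h2 : dist x' x = dist x x' := dist_comm _ _
            linarith [hx'd.le]
        _ = R + 2 := by ring
  exact Metric.mem_cthickening_of_dist_le x x' 1 _ hx' hx'd.le
end
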